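/- Let N ≥ 2. An N×N Hermitian matrix X satisfies trace(φ_{m,n} φ_{m,n}* · X) = 0 for all m = 1,…,4 and n = 1,…,N−1 if and only if X[n,n] = 0 for all n = 1,…,N and X[n,n+1] = 0 (equivalently X[n+1,n] = 0) for all n = 1,…,N−1. (Lemma 4, part Φ: characterization of the null space of the measurement map A_Φ on Hermitian matrices.) -/

import Mathlib

open Complex Matrix MeasureTheory

noncomputable section

/-- α = √((1 − 1/√3)/2) -/
def alph : ℂ := (Real.sqrt ((1 - 1/Real.sqrt 3)/2) : ℝ)

/-- β = e^{i5π/4}·√((1 + 1/√3)/2) -/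
def beta : ℂ := Complex.exp (Complex.I * (5 * (Real.pi : ℂ) / 4)) *
  (Real.sqrt ((1 + 1/Real.sqrt 3)/2) : ℝ)

/-- the four frame vectors a₁ = (α,β), a₂ = (β,α), a₃ = (α,−β), a₄ = (−β,α) in ℂ² -/
def coef : Fin 4 → Fin 2 → ℂ := ![![alph, beta], ![beta, alph], ![alph, -beta], ![-beta, alph]]

/-- inner product ⟨x,y⟩ = Σ x[n]·conj(y[n]) -/
def inn {N : ℕ} (x y : Fin N → ℂ) : ℂ := ∑ i, x i * (starRingEnd ℂ) (y i)

/-- Euclidean norm ‖x‖ = √⟨x,x⟩ -/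
def nrm {N : ℕ} (x : Fin N → ℂ) : ℝ := Real.sqrt (inn x x).re

/-- outer product x y* -/
def outer {N : ℕ} (x y : Fin N → ℂ) : Matrix (Fin N) (Fin N) ℂ :=
  fun i j => x i * (starRingEnd ℂ) (y j)

/-- measurement vectors φ_{m,n} (0-based n: nonzero entries at positions n and n+1) -/
def phiv (N : ℕ) (m : Fin 4) (n : ℕ) : Fin N → ℂ :=
  fun i => if (i : ℕ) = n then coef m 0 else if (i : ℕ) = n + 1 then coef m 1 else 0

/-- measurement vectors ψ_{m,n} (0-based n: nonzero entries at positions 0 and n+1) -/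
def psiv (N : ℕ) (m : Fin 4) (n : ℕ) : Fin N → ℂ :=
  fun i => if (i : ℕ) = 0 then coef m 0 else if (i : ℕ) = n + 1 then coef m 1 else 0

/-- Hilbert–Schmidt inner product ⟨X,Y⟩ = trace(Y*X) -/
def hs {N : ℕ} (X Y : Matrix (Fin N) (Fin N) ℂ) : ℂ := Matrix.trace (Yᴴ * X)

/-- Frobenius (Hilbert–Schmidt) norm -/
def frob {N : ℕ} (X : Matrix (Fin N) (Fin N) ℂ) : ℝ := Real.sqrt (Matrix.trace (Xᴴ * X)).re

/-- spectral norm (largest singular value) -/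
def specNorm {N : ℕ} (A : Matrix (Fin N) (Fin N) ℂ) : ℝ :=
  sSup {r : ℝ | ∃ v : Fin N → ℂ, nrm v ≤ 1 ∧ r = nrm (A.mulVec v)}

lemma sum_if_two {N : ℕ} (n : ℕ) (hn : n + 1 < N) (a b : ℂ) (g : Fin N → ℂ) :
    ∑ i : Fin N, (if (i:ℕ) = n then a else if (i:ℕ) = n+1 then b else 0) * g i
      = a * g ⟨n, Nat.lt_of_succ_lt hn⟩ + b * g ⟨n+1, hn⟩ := by
  rw [Fintype.sum_eq_add (⟨n, Nat.lt_of_succ_lt hn⟩ : Fin N) (⟨n+1, hn⟩ : Fin N)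
    (Fin.ne_of_val_ne (by simp)) (fun x hx => by
      rw [if_neg (fun h => hx.1 (Fin.ext (by simpa using h))),
        if_neg (fun h => hx.2 (Fin.ext (by simpa using h))), zero_mul])]
  norm_num

lemma trace_outer_two {N : ℕ} (n : ℕ) (hn : n + 1 < N) (a b : ℂ)
    (X : Matrix (Fin N) (Fin N) ℂ) :
    Matrix.trace (outer
      (fun i : Fin N => if (i:ℕ) = n then a else if (i:ℕ) = n+1 then b else 0)
      (fun i : Fin N => if (i:ℕ) = n then a else if (i:ℕ) = n+1 then b else 0) * X)
    = a * (starRingEnd ℂ) a * X ⟨n, Nat.lt_of_succ_lt hn⟩ ⟨n, Nat.lt_of_succ_lt hn⟩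
      + b * (starRingEnd ℂ) b * X ⟨n+1, hn⟩ ⟨n+1, hn⟩
      + a * (starRingEnd ℂ) b * X ⟨n+1, hn⟩ ⟨n, Nat.lt_of_succ_lt hn⟩
      + b * (starRingEnd ℂ) a * X ⟨n, Nat.lt_of_succ_lt hn⟩ ⟨n+1, hn⟩ := by
  have h1 : Matrix.trace (outer
      (fun i : Fin N => if (i:ℕ) = n then a else if (i:ℕ) = n+1 then b else 0)
      (fun i : Fin N => if (i:ℕ) = n then a else if (i:ℕ) = n+1 then b else 0) * X)
      = ∑ j : Fin N, (if (j:ℕ) = n then (starRingEnd ℂ) a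
          else if (j:ℕ) = n+1 then (starRingEnd ℂ) b else 0) *
        ∑ i : Fin N, (if (i:ℕ) = n then a else if (i:ℕ) = n+1 then b else 0) * X j i := by
    simp only [Matrix.trace, Matrix.diag, Matrix.mul_apply, outer]
    rw [Finset.sum_comm]
    congr 1; ext j
    rw [Finset.mul_sum]
    congr 1; ext i
    rw [apply_ite (starRingEnd ℂ), apply_ite (starRingEnd ℂ), map_zero]
    ring
  rw [h1, sum_if_two n hn, sum_if_two n hn, sum_if_two n hn]
  ring

lemma sqrt3_gt_one : 1 < Real.sqrt 3 := by
  nlinarith [Real.sq_sqrt (by norm_num : (0:ℝ) ≤ 3), Real.sqrt_nonneg 3]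

lemma Ar_pos : (0:ℝ) < (1 - 1/Real.sqrt 3)/2 := by
  have h := sqrt3_gt_one
  have : 1/Real.sqrt 3 < 1 := by rw [div_lt_one (by linarith)]; linarith
  linarith

lemma Br_pos : (0:ℝ) < (1 + 1/Real.sqrt 3)/2 := by
  have h := sqrt3_gt_one
  have : 0 < 1/Real.sqrt 3 := by positivity
  linarith

lemma conj_alph : (starRingEnd ℂ) alph = alph := Complex.conj_ofReal _

lemma alph_sq : alph * alph = (((1 - 1/Real.sqrt 3)/2 : ℝ) : ℂ) := by
  rw [alph, ← Complex.ofReal_mul, Real.mul_self_sqrt Ar_pos.le]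

lemma beta_eq : beta = Complex.exp (((5*Real.pi/4 : ℝ) : ℂ) * Complex.I) *
    ((Real.sqrt ((1 + 1/Real.sqrt 3)/2) : ℝ) : ℂ) := by
  rw [beta]; congr 1; congr 1; push_cast; ring

lemma cos54 : Real.cos (5*Real.pi/4) = -(Real.sqrt 2/2) := by
  have : (5*Real.pi/4 : ℝ) = Real.pi + Real.pi/4 := by ring
  rw [this, Real.cos_add, Real.cos_pi, Real.sin_pi, Real.cos_pi_div_four]; ring

lemma sin54 : Real.sin (5*Real.pi/4) = -(Real.sqrt 2/2) := by
  have : (5*Real.pi/4 : ℝ) = Real.pi + Real.pi/4 := by ring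
  rw [this, Real.sin_add, Real.cos_pi, Real.sin_pi, Real.sin_pi_div_four]; ring

lemma beta_re : beta.re = -(Real.sqrt 2/2) * Real.sqrt ((1 + 1/Real.sqrt 3)/2) := by
  rw [beta_eq, Complex.mul_re, Complex.ofReal_re, Complex.ofReal_im, mul_zero, sub_zero,
    Complex.exp_ofReal_mul_I_re, cos54]

lemma beta_im : beta.im = -(Real.sqrt 2/2) * Real.sqrt ((1 + 1/Real.sqrt 3)/2) := by
  rw [beta_eq, Complex.mul_im, Complex.ofReal_re, Complex.ofReal_im, mul_zero, zero_add,
    Complex.exp_ofReal_mul_I_im, sin54]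

lemma alph_re : alph.re = Real.sqrt ((1 - 1/Real.sqrt 3)/2) := by
  rw [alph]; exact Complex.ofReal_re _

lemma alph_im : alph.im = 0 := by
  rw [alph]; exact Complex.ofReal_im _

lemma beta_mul_conj : beta * (starRingEnd ℂ) beta = (((1 + 1/Real.sqrt 3)/2 : ℝ) : ℂ) := by
  rw [Complex.mul_conj]
  congr 1
  rw [Complex.normSq_apply, beta_re, beta_im]
  have h2 : Real.sqrt 2 * Real.sqrt 2 = 2 := Real.mul_self_sqrt (by norm_num)
  have hB : Real.sqrt ((1 + 1/Real.sqrt 3)/2) * Real.sqrt ((1 + 1/Real.sqrt 3)/2)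
      = (1 + 1/Real.sqrt 3)/2 := Real.mul_self_sqrt Br_pos.le
  nlinarith [h2, hB]

def cc : ℂ := alph * (starRingEnd ℂ) beta

lemma cc_re : cc.re = -(Real.sqrt ((1 - 1/Real.sqrt 3)/2) *
    ((Real.sqrt 2/2) * Real.sqrt ((1 + 1/Real.sqrt 3)/2))) := by
  rw [cc, Complex.mul_re, Complex.conj_re, Complex.conj_im, beta_re, beta_im,
    alph_re, alph_im]
  ring

lemma cc_im : cc.im = Real.sqrt ((1 - 1/Real.sqrt 3)/2) *
    ((Real.sqrt 2/2) * Real.sqrt ((1 + 1/Real.sqrt 3)/2)) := by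
  rw [cc, Complex.mul_im, Complex.conj_re, Complex.conj_im, beta_re, beta_im,
    alph_re, alph_im]
  ring

lemma prod_pos : 0 < Real.sqrt ((1 - 1/Real.sqrt 3)/2) *
    ((Real.sqrt 2/2) * Real.sqrt ((1 + 1/Real.sqrt 3)/2)) := by
  have := Ar_pos; have := Br_pos
  positivity

lemma cc_re_ne : cc.re ≠ 0 := by
  rw [cc_re]; exact neg_ne_zero.mpr prod_pos.ne'

lemma cc_im_ne : cc.im ≠ 0 := by
  rw [cc_im]; exact prod_pos.ne'

lemma add_conj_ne : cc + (starRingEnd ℂ) cc ≠ 0 := by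
  rw [Complex.add_conj]
  simpa using cc_re_ne

lemma sub_conj_ne : cc - (starRingEnd ℂ) cc ≠ 0 := by
  rw [Complex.sub_conj]
  exact mul_ne_zero (by simpa using cc_im_ne) Complex.I_ne_zero

lemma conj_cc : (starRingEnd ℂ) cc = alph * beta := by
  rw [cc, _root_.map_mul, conj_alph, Complex.conj_conj]

lemma sum_eq_one : (((1 - 1/Real.sqrt 3)/2 : ℝ) : ℂ) + (((1 + 1/Real.sqrt 3)/2 : ℝ) : ℂ) = 1 := by
  push_cast; ring

lemma diff_ne : (((1 - 1/Real.sqrt 3)/2 : ℝ) : ℂ) - (((1 + 1/Real.sqrt 3)/2 : ℝ) : ℂ) ≠ 0 := by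
  rw [← Complex.ofReal_sub, Complex.ofReal_ne_zero]
  have h := sqrt3_gt_one
  have : 0 < 1/Real.sqrt 3 := by positivity
  intro hc; nlinarith


/-- Lemma 4 (part Φ): a Hermitian matrix X lies in the null space of A_Φ iff its
diagonal entries and its first super-diagonal entries vanish. -/
theorem null_space_Phi (N : ℕ) (hN : 2 ≤ N) (X : Matrix (Fin N) (Fin N) ℂ)
    (hX : X.IsHermitian) :
    (∀ (m : Fin 4) (n : ℕ), n + 1 < N →
        Matrix.trace (outer (phiv N m n) (phiv N m n) * X) = 0) ↔
    ((∀ i : Fin N, X i i = 0) ∧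
      ∀ (n : ℕ) (hn : n + 1 < N), X ⟨n, by omega⟩ ⟨n + 1, hn⟩ = 0) := by
  constructor
  · intro h
    have key : ∀ (n : ℕ) (hn : n + 1 < N),
        X ⟨n, by omega⟩ ⟨n, by omega⟩ = 0 ∧ X ⟨n+1, hn⟩ ⟨n+1, hn⟩ = 0 ∧
        X ⟨n, by omega⟩ ⟨n+1, hn⟩ = 0 := by
      intro n hn
      have tr : ∀ m : Fin 4,
          coef m 0 * (starRingEnd ℂ) (coef m 0) * X ⟨n, by omega⟩ ⟨n, by omega⟩
          + coef m 1 * (starRingEnd ℂ) (coef m 1) * X ⟨n+1, hn⟩ ⟨n+1, hn⟩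
          + coef m 0 * (starRingEnd ℂ) (coef m 1) * X ⟨n+1, hn⟩ ⟨n, by omega⟩
          + coef m 1 * (starRingEnd ℂ) (coef m 0) * X ⟨n, by omega⟩ ⟨n+1, hn⟩ = 0 :=
        fun m => (trace_outer_two n hn (coef m 0) (coef m 1) X).symm.trans (h m n hn)
      have E0 := tr 0
      have E1 := tr 1
      have E2 := tr 2
      have E3 := tr 3
      simp only [coef, Matrix.cons_val_zero, Matrix.cons_val_one, Matrix.head_cons,
        Fin.isValue, Matrix.cons_val_two, Matrix.cons_val_three, Matrix.tail_cons,
        Matrix.head_fin_const, map_neg, conj_alph, neg_mul, mul_neg, neg_neg] at E0 E1 E2 E3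
      have ha := alph_sq
      have hb := beta_mul_conj
      have hc : cc = alph * (starRingEnd ℂ) beta := rfl
      have hc' := conj_cc
      have hP : (((1 - 1/Real.sqrt 3)/2 : ℝ) : ℂ) * X ⟨n, by omega⟩ ⟨n, by omega⟩
          + (((1 + 1/Real.sqrt 3)/2 : ℝ) : ℂ) * X ⟨n+1, hn⟩ ⟨n+1, hn⟩ = 0 := by
        linear_combination (E0 + E2)/2 - X ⟨n, by omega⟩ ⟨n, by omega⟩ * ha
          - X ⟨n+1, hn⟩ ⟨n+1, hn⟩ * hb
      have hQ : (((1 + 1/Real.sqrt 3)/2 : ℝ) : ℂ) * X ⟨n, by omega⟩ ⟨n, by omega⟩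
          + (((1 - 1/Real.sqrt 3)/2 : ℝ) : ℂ) * X ⟨n+1, hn⟩ ⟨n+1, hn⟩ = 0 := by
        linear_combination (E1 + E3)/2 - X ⟨n+1, hn⟩ ⟨n+1, hn⟩ * ha
          - X ⟨n, by omega⟩ ⟨n, by omega⟩ * hb
      have hd : ((((1 - 1/Real.sqrt 3)/2 : ℝ) : ℂ) - (((1 + 1/Real.sqrt 3)/2 : ℝ) : ℂ))
          * X ⟨n, by omega⟩ ⟨n, by omega⟩ = 0 := by
        linear_combination (((1 - 1/Real.sqrt 3)/2 : ℝ) : ℂ) * hP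
          - (((1 + 1/Real.sqrt 3)/2 : ℝ) : ℂ) * hQ
          - ((((1 - 1/Real.sqrt 3)/2 : ℝ) : ℂ) - (((1 + 1/Real.sqrt 3)/2 : ℝ) : ℂ))
            * X ⟨n, by omega⟩ ⟨n, by omega⟩ * sum_eq_one
      have he : ((((1 - 1/Real.sqrt 3)/2 : ℝ) : ℂ) - (((1 + 1/Real.sqrt 3)/2 : ℝ) : ℂ))
          * X ⟨n+1, hn⟩ ⟨n+1, hn⟩ = 0 := by
        linear_combination (((1 - 1/Real.sqrt 3)/2 : ℝ) : ℂ) * hQ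
          - (((1 + 1/Real.sqrt 3)/2 : ℝ) : ℂ) * hP
          - ((((1 - 1/Real.sqrt 3)/2 : ℝ) : ℂ) - (((1 + 1/Real.sqrt 3)/2 : ℝ) : ℂ))
            * X ⟨n+1, hn⟩ ⟨n+1, hn⟩ * sum_eq_one
      have hR : cc * X ⟨n+1, hn⟩ ⟨n, by omega⟩
          + (starRingEnd ℂ) cc * X ⟨n, by omega⟩ ⟨n+1, hn⟩ = 0 := by
        linear_combination (E0 - E2)/2 + X ⟨n+1, hn⟩ ⟨n, by omega⟩ * hc
          + X ⟨n, by omega⟩ ⟨n+1, hn⟩ * hc'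
      have hS : (starRingEnd ℂ) cc * X ⟨n+1, hn⟩ ⟨n, by omega⟩
          + cc * X ⟨n, by omega⟩ ⟨n+1, hn⟩ = 0 := by
        linear_combination (E1 - E3)/2 + X ⟨n+1, hn⟩ ⟨n, by omega⟩ * hc'
          + X ⟨n, by omega⟩ ⟨n+1, hn⟩ * hc
      have hz : (cc + (starRingEnd ℂ) cc) * (cc - (starRingEnd ℂ) cc)
          * X ⟨n, by omega⟩ ⟨n+1, hn⟩ = 0 := by
        linear_combination cc * hS - (starRingEnd ℂ) cc * hR
      refine ⟨(mul_eq_zero.1 hd).resolve_left diff_ne,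
        (mul_eq_zero.1 he).resolve_left diff_ne, ?_⟩
      rcases mul_eq_zero.1 hz with h' | h'
      · rcases mul_eq_zero.1 h' with h'' | h''
        · exact absurd h'' add_conj_ne
        · exact absurd h'' sub_conj_ne
      · exact h'
    refine ⟨fun i => ?_, fun n hn => (key n hn).2.2⟩
    by_cases hi : (i : ℕ) + 1 < N
    · exact (key (i : ℕ) hi).1
    · obtain ⟨k, hk⟩ : ∃ k, (i : ℕ) = k + 1 := ⟨(i : ℕ) - 1, by omega⟩
      have hkn : k + 1 < N := by have := i.isLt; omega
      have hik : i = ⟨k+1, hkn⟩ := Fin.ext hk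
      rw [hik]
      exact (key k hkn).2.1
  · rintro ⟨hdiag, hsup⟩ m n hn
    have tr' : Matrix.trace (outer (phiv N m n) (phiv N m n) * X)
        = coef m 0 * (starRingEnd ℂ) (coef m 0) * X ⟨n, by omega⟩ ⟨n, by omega⟩
          + coef m 1 * (starRingEnd ℂ) (coef m 1) * X ⟨n+1, hn⟩ ⟨n+1, hn⟩
          + coef m 0 * (starRingEnd ℂ) (coef m 1) * X ⟨n+1, hn⟩ ⟨n, by omega⟩
          + coef m 1 * (starRingEnd ℂ) (coef m 0) * X ⟨n, by omega⟩ ⟨n+1, hn⟩ :=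
      trace_outer_two n hn (coef m 0) (coef m 1) X
    have h1 : X ⟨n+1, hn⟩ ⟨n, by omega⟩ = 0 := by
      have h2 := hX.apply ⟨n, by omega⟩ ⟨n+1, hn⟩
      rw [hsup n hn] at h2
      exact star_eq_zero.mp h2
    rw [tr', hdiag, hdiag, hsup n hn, h1]
    ring
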